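/- Let F be a nonsingular unsatisfiable hitting clause-set admitting a nontrivial clause-factorisation F = (F₀ ∖ {C}) ∪ {C ∪ D : D ∈ G}, and suppose F is not strictly fs-resolvable. Let s = |var(F₀) ∩ var(G)|. If N₀, N₁ ∈ ℕ are such that every nonsingular unsatisfiable hitting clause-set H with δ(H) = δ(F₀) satisfies n(H) ≤ N₀ and every nonsingular unsatisfiable hitting clause-set H with δ(H) = δ(G) satisfies n(H) ≤ N₁, then n(F) ≤ N₀ + N₁ + s + 1. -/

import Mathlib

/-- A clause-set: a finite set of finite sets of integers. -/
abbrev Cls := Finset (Finset ℤ)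

/-- A clause: a finite set of nonzero integers, clash-free. -/
def IsClause (C : Finset ℤ) : Prop := (0 : ℤ) ∉ C ∧ ∀ x ∈ C, -x ∉ C

/-- All members are clauses. -/
def IsClauseSet (F : Cls) : Prop := ∀ C ∈ F, IsClause C

/-- Satisfiability: some clause (partial assignment) meets every clause of `F`. -/
def Sat (F : Cls) : Prop := ∃ S : Finset ℤ, IsClause S ∧ ∀ D ∈ F, (S ∩ D).Nonempty

/-- Hitting: any two distinct clauses clash. -/
def Hitting (F : Cls) : Prop := ∀ C ∈ F, ∀ D ∈ F, C ≠ D → ∃ x ∈ C, -x ∈ D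

/-- Unsatisfiable hitting clause-set. -/
def UHit (F : Cls) : Prop := IsClauseSet F ∧ Hitting F ∧ ¬ Sat F

/-- The variables of a clause-set (as absolute values of its literals). -/
def cvar (F : Cls) : Finset ℤ := F.sup (fun C => C.image (fun x => |x|))

/-- Number of variables. -/
def nvar (F : Cls) : ℕ := (cvar F).card

/-- Deficiency: number of clauses minus number of variables. -/
def deficiency (F : Cls) : ℤ := (F.card : ℤ) - (nvar F : ℤ)

/-- Literal degree. -/
def ldeg (F : Cls) (x : ℤ) : ℕ := (F.filter (fun C => x ∈ C)).card

/-- Variable degree. -/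
def vdeg (F : Cls) (v : ℤ) : ℕ := ldeg F v + ldeg F (-v)

/-- Singular variable. -/
def SingularVar (F : Cls) (v : ℤ) : Prop :=
  v ∈ cvar F ∧ min (ldeg F v) (ldeg F (-v)) = 1

/-- Nonsingular clause-set. -/
def Nonsingular (F : Cls) : Prop := ∀ v, ¬ SingularVar F v

/-- Number of singular variables. -/
def nsv (F : Cls) : ℕ :=
  ((cvar F).filter (fun v => min (ldeg F v) (ldeg F (-v)) = 1)).card

/-- Number of 1-singular variables. -/
def nosv (F : Cls) : ℕ :=
  ((cvar F).filter (fun v => min (ldeg F v) (ldeg F (-v)) = 1 ∧ vdeg F v = 2)).card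

/-- Number of singular, non-1-singular variables. -/
def nnosv (F : Cls) : ℕ :=
  ((cvar F).filter (fun v => min (ldeg F v) (ldeg F (-v)) = 1 ∧ vdeg F v ≠ 2)).card

/-- Full subsumption pair: `{E ∪ {x}, E ∪ {-x}}`. -/
def IsFsPair (P : Cls) : Prop :=
  ∃ (E : Finset ℤ) (x : ℤ), IsClause E ∧ x ≠ 0 ∧ x ∉ E ∧ -x ∉ E ∧
    P = {insert x E, insert (-x) E}

/-- Strict fs-resolvability: an fs-pair whose resolvent is not in `F`, and whose
resolution variable occurs in the rest of `F`. -/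
def StrictlyFsResolvable (F : Cls) : Prop :=
  ∃ (E : Finset ℤ) (x : ℤ), IsClause E ∧ x ≠ 0 ∧ x ∉ E ∧ -x ∉ E ∧
    insert x E ∈ F ∧ insert (-x) E ∈ F ∧ E ∉ F ∧
    |x| ∈ cvar (F \ {insert x E, insert (-x) E})

/-- `F'` is an nfs-flip of `F`: an nfs-pair `{E ∪ {x}, E ∪ {-x,y}} ⊆ F` is replaced
by its flipped pair `{E ∪ {x,-y}, E ∪ {y}}`, which must not intersect `F`. -/
def NfsFlip (F F' : Cls) : Prop :=
  ∃ (E : Finset ℤ) (x y : ℤ), IsClause E ∧ x ≠ 0 ∧ y ≠ 0 ∧ |x| ≠ |y| ∧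
    x ∉ E ∧ -x ∉ E ∧ y ∉ E ∧ -y ∉ E ∧
    insert x E ∈ F ∧ insert y (insert (-x) E) ∈ F ∧
    insert (-y) (insert x E) ∉ F ∧ insert y E ∉ F ∧
    F' = (F \ {insert x E, insert y (insert (-x) E)}) ∪
         {insert (-y) (insert x E), insert y E}

/-- Intersection of all clauses of `F` (for nonempty `F`). -/
def bigInter (F : Cls) : Finset ℤ := (F.sup id).filter (fun x => ∀ C ∈ F, x ∈ C)

/-- Clause-factor: a nonempty `F' ⊆ F` whose residue is unsatisfiable. -/
def ClauseFactor (F F' : Cls) : Prop :=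
  F'.Nonempty ∧ F' ⊆ F ∧ ¬ Sat (F'.image (fun E => E \ bigInter F'))

/-- A clause-factor is trivial if it has one clause, or is unsatisfiable and all of `F`. -/
def TrivialFactor (F F' : Cls) : Prop := F'.card = 1 ∨ (¬ Sat F' ∧ F' = F)

/-- Clause-irreducible: every clause-factor is trivial. -/
def ClauseIrreducible (F : Cls) : Prop := ∀ F', ClauseFactor F F' → TrivialFactor F F'

/-- DP-reduction (variable elimination) on variable `v`. -/
def dp (v : ℤ) (F : Cls) : Cls :=
  ((F ×ˢ F).filter (fun p => p.1 ∩ p.2.image (fun x => -x) = {v})).image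
    (fun p => (p.1 ∪ p.2) \ {v, -v}) ∪
  F.filter (fun C => v ∉ C ∧ -v ∉ C)

/-- `x` (or `-x`) occurs in a clause of `F`. -/
def LitIn (F : Cls) (x : ℤ) : Prop := ∃ C ∈ F, x ∈ C ∨ -x ∈ C

/-- Isomorphism of clause-sets. -/
def Iso (F G : Cls) : Prop :=
  ∃ f : ℤ → ℤ, (∀ x, f (-x) = - f x) ∧
    (∀ x y, LitIn F x → LitIn F y → f x = f y → x = y) ∧
    G = F.image (fun C => C.image f)

/-- The clause-set D3. -/
def D3 : Cls := {({1,2,3} : Finset ℤ), {-1,-2,-3}, {-1,2}, {-2,3}, {-3,1}}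

/-- Logical equivalence of clause-sets. -/
def LogEquiv (F G : Cls) : Prop :=
  ∀ S : Finset ℤ, IsClause S →
    ((∀ D ∈ F, (S ∩ D).Nonempty) ↔ (∀ D ∈ G, (S ∩ D).Nonempty))

namespace Stmt3Aux

open Finset

/-! ### Basic clause lemmas -/

lemma isClause_subset {C S : Finset ℤ} (h : IsClause C) (hs : S ⊆ C) : IsClause S :=
  ⟨fun h0 => h.1 (hs h0), fun x hx hnx => h.2 x (hs hx) (hs hnx)⟩

lemma clause_ne_zero {C : Finset ℤ} (h : IsClause C) {x : ℤ} (hx : x ∈ C) : x ≠ 0 := by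
  rintro rfl; exact h.1 hx

lemma isClause_insert {S : Finset ℤ} (h : IsClause S) {x : ℤ} (hx : x ≠ 0)
    (h1 : x ∉ S) (h2 : -x ∉ S) : IsClause (insert x S) := by
  constructor
  · simp only [mem_insert]
    rintro (h0 | h0)
    · exact hx h0.symm
    · exact h.1 h0
  · intro y hy hny
    simp only [mem_insert] at hy hny
    rcases hy with rfl | hy
    · rcases hny with h0 | h0
      · omega
      · exact h2 h0
    · rcases hny with h0 | h0
      · rw [neg_eq_iff_eq_neg] at h0; subst h0; exact h2 hy
      · exact h.2 y hy h0

lemma isClause_erase {S : Finset ℤ} (h : IsClause S) (x : ℤ) : IsClause (S.erase x) :=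
  isClause_subset h (erase_subset _ _)

/-- the negation of a finset of literals -/
def neg (S : Finset ℤ) : Finset ℤ := S.image (fun x => -x)

lemma mem_neg {S : Finset ℤ} {x : ℤ} : x ∈ neg S ↔ -x ∈ S := by
  simp only [neg, mem_image]
  constructor
  · rintro ⟨a, ha, rfl⟩; simpa
  · intro h; exact ⟨-x, h, by ring⟩

lemma isClause_neg {S : Finset ℤ} (h : IsClause S) : IsClause (neg S) := by
  constructor
  · intro h0; rw [mem_neg] at h0; exact h.1 (by simpa using h0)
  · intro x hx hnx
    rw [mem_neg] at hx hnx
    simp only [neg_neg] at hnx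
    exact h.2 x hnx (by simpa using hx)

/-! ### cvar lemmas -/

lemma mem_cvar {F : Cls} {w : ℤ} : w ∈ cvar F ↔ ∃ C ∈ F, ∃ x ∈ C, |x| = w := by
  simp only [cvar, mem_sup, mem_image]

lemma abs_mem_cvar {F : Cls} {C : Finset ℤ} {x : ℤ} (hC : C ∈ F) (hx : x ∈ C) :
    |x| ∈ cvar F := mem_cvar.2 ⟨C, hC, x, hx, rfl⟩

lemma cvar_nonneg {F : Cls} {w : ℤ} (h : w ∈ cvar F) : 0 ≤ w := by
  obtain ⟨C, -, x, -, rfl⟩ := mem_cvar.1 h; exact abs_nonneg x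

lemma cvar_pos {F : Cls} (hcl : IsClauseSet F) {w : ℤ} (h : w ∈ cvar F) : 0 < w := by
  obtain ⟨C, hC, x, hx, rfl⟩ := mem_cvar.1 h
  have := clause_ne_zero (hcl C hC) hx
  exact abs_pos.2 this

lemma cvar_mono {F F' : Cls} (h : F ⊆ F') : cvar F ⊆ cvar F' := by
  intro w hw
  obtain ⟨C, hC, x, hx, rfl⟩ := mem_cvar.1 hw
  exact abs_mem_cvar (h hC) hx

lemma cvar_union {F G : Cls} : cvar (F ∪ G) = cvar F ∪ cvar G := by
  simp [cvar, Finset.sup_union]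

lemma cvar_insert {F : Cls} {C : Finset ℤ} :
    cvar (insert C F) = C.image (fun x => |x|) ∪ cvar F := by
  simp [cvar, Finset.sup_insert]

lemma abs_cases' {x w : ℤ} (h : |x| = w) : x = w ∨ x = -w := by
  rcases abs_cases x with ⟨h1, -⟩ | ⟨h1, -⟩ <;> omega

/-! ### ldeg lemmas -/

lemma ldeg_pos_iff {F : Cls} {x : ℤ} : 0 < ldeg F x ↔ ∃ C ∈ F, x ∈ C := by
  simp only [ldeg, card_pos]
  constructor
  · rintro ⟨C, hC⟩; simp only [mem_filter] at hC; exact ⟨C, hC.1, hC.2⟩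
  · rintro ⟨C, hC, hx⟩; exact ⟨C, mem_filter.2 ⟨hC, hx⟩⟩

lemma ldeg_eq_zero {F : Cls} {x : ℤ} (h : ∀ C ∈ F, x ∉ C) : ldeg F x = 0 := by
  simp only [ldeg, card_eq_zero, filter_eq_empty_iff]
  exact h

lemma unique_of_ldeg_one {F : Cls} {x : ℤ} (h : ldeg F x = 1) {C D : Finset ℤ}
    (hC : C ∈ F) (hxC : x ∈ C) (hD : D ∈ F) (hxD : x ∈ D) : C = D := by
  have h1 : C ∈ F.filter (fun C => x ∈ C) := mem_filter.2 ⟨hC, hxC⟩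
  have h2 : D ∈ F.filter (fun C => x ∈ C) := mem_filter.2 ⟨hD, hxD⟩
  have := Finset.card_le_one.1 (le_of_eq h)
  exact this _ h1 _ h2

lemma exists_of_ldeg_one {F : Cls} {x : ℤ} (h : ldeg F x = 1) : ∃ C ∈ F, x ∈ C := by
  rw [← ldeg_pos_iff]; omega

lemma ldeg_union {F G : Cls} (h : Disjoint F G) (x : ℤ) :
    ldeg (F ∪ G) x = ldeg F x + ldeg G x := by
  simp only [ldeg, filter_union]
  exact card_union_of_disjoint (disjoint_filter_filter h)

lemma ldeg_insert {F : Cls} {C : Finset ℤ} (h : C ∉ F) (x : ℤ) :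
    ldeg (insert C F) x = (if x ∈ C then 1 else 0) + ldeg F x := by
  simp only [ldeg, filter_insert]
  split
  · rw [card_insert_of_notMem (fun hc => h (mem_filter.1 hc).1)]; omega
  · simp

/-! ### singular variable sets -/

/-- the set of singular variables -/
def singSet (F : Cls) : Finset ℤ :=
  (cvar F).filter (fun v => min (ldeg F v) (ldeg F (-v)) = 1)

lemma nonsingular_of_singSet_empty {F : Cls} (h : singSet F = ∅) : Nonsingular F := by
  intro v hv
  have : v ∈ singSet F := mem_filter.2 ⟨hv.1, hv.2⟩
  simp [h] at this

lemma mem_singSet {F : Cls} {w : ℤ} :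
    w ∈ singSet F ↔ w ∈ cvar F ∧ min (ldeg F w) (ldeg F (-w)) = 1 := mem_filter

end Stmt3Aux

namespace Stmt3Aux

open Finset

/-! ### Total assignments and falsified clauses -/

/-- `S` falsifies `E`: every literal of `E` has its complement in `S`. -/
def Falsifies (S E : Finset ℤ) : Prop := ∀ x ∈ E, -x ∈ S

/-- extend a clause `S` to a total assignment over the variables `V` -/
def extT (S V : Finset ℤ) : Finset ℤ := S ∪ V.filter (fun w => w ∉ S ∧ -w ∉ S)

lemma extT_subset {S V : Finset ℤ} : S ⊆ extT S V := subset_union_left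

lemma extT_clause {S V : Finset ℤ} (hS : IsClause S) (hV : ∀ w ∈ V, 0 < w) :
    IsClause (extT S V) := by
  constructor
  · simp only [extT, mem_union, mem_filter]
    rintro (h0 | ⟨h0, h1, h2⟩)
    · exact hS.1 h0
    · have := hV 0 h0; omega
  · intro x hx hnx
    simp only [extT, mem_union, mem_filter] at hx hnx
    rcases hx with hx | ⟨hx, hx1, hx2⟩
    · rcases hnx with hnx | ⟨hnx, hnx1, hnx2⟩
      · exact hS.2 x hx hnx
      · simp only [neg_neg] at hnx2; exact hnx2 hx
    · rcases hnx with hnx | ⟨hnx, hnx1, hnx2⟩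
      · exact hx2 hnx
      · have h1 := hV x hx
        have h2 := hV (-x) hnx
        omega

lemma extT_total {S V : Finset ℤ} : ∀ w ∈ V, w ∈ extT S V ∨ -w ∈ extT S V := by
  intro w hw
  by_cases h1 : w ∈ S
  · exact Or.inl (extT_subset h1)
  by_cases h2 : -w ∈ S
  · exact Or.inr (extT_subset h2)
  · left; exact mem_union_right _ (mem_filter.2 ⟨hw, h1, h2⟩)

lemma exists_falsified {H : Cls} (hU : UHit H) {S : Finset ℤ} (hS : IsClause S)
    (htot : ∀ w ∈ cvar H, w ∈ S ∨ -w ∈ S) : ∃ E ∈ H, Falsifies S E := by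
  have hns := hU.2.2
  rw [Sat] at hns
  push_neg at hns
  obtain ⟨D, hD, hSD⟩ := hns S hS
  refine ⟨D, hD, fun x hx => ?_⟩
  have hxS : x ∉ S := fun hxS => (Finset.not_nonempty_iff_eq_empty.2 hSD) ⟨x, mem_inter.2 ⟨hxS, hx⟩⟩
  have habs : |x| ∈ cvar H := abs_mem_cvar hD hx
  rcases htot _ habs with h | h <;> rcases abs_cases x with ⟨he, -⟩ | ⟨he, -⟩ <;>
    rw [he] at h
  · exact absurd h hxS
  · simpa using h
  · exact h
  · simp at h; exact absurd h hxS

lemma falsified_unique {H : Cls} (hH : Hitting H) {S E₁ E₂ : Finset ℤ} (hS : IsClause S)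
    (he1 : E₁ ∈ H) (he2 : E₂ ∈ H) (h1 : Falsifies S E₁) (h2 : Falsifies S E₂) : E₁ = E₂ := by
  by_contra hne
  obtain ⟨x, hx1, hx2⟩ := hH E₁ he1 E₂ he2 hne
  have ha : -x ∈ S := h1 x hx1
  have hb : x ∈ S := by simpa using h2 (-x) hx2
  exact hS.2 x hb ha

/-- flip a literal in an assignment -/
def flip (S : Finset ℤ) (v : ℤ) : Finset ℤ := insert (-v) (S.erase v)

lemma flip_clause {S : Finset ℤ} (hS : IsClause S) {v : ℤ} (hv : v ≠ 0) (hvS : v ∈ S) :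
    IsClause (flip S v) := by
  apply isClause_insert (isClause_erase hS v) (by omega)
  · intro h; exact hS.2 v hvS (mem_of_mem_erase h)
  · simp only [neg_neg, mem_erase]; rintro ⟨h, -⟩; omega

lemma flip_total {S V : Finset ℤ} (htot : ∀ w ∈ V, w ∈ S ∨ -w ∈ S) {v : ℤ} (hv : v ≠ 0) :
    ∀ w ∈ V, w ∈ flip S v ∨ -w ∈ flip S v := by
  intro w hw
  rcases htot w hw with h | h
  · by_cases hwv : w = v
    · subst hwv; right; exact mem_insert_self _ _
    · by_cases hwv' : w = -v
      · left; rw [hwv']; exact mem_insert_self _ _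
      · left; exact mem_insert_of_mem (mem_erase.2 ⟨hwv, h⟩)
  · by_cases hwv : -w = v
    · left; rw [show w = -v by omega]; exact mem_insert_self _ _
    · right; exact mem_insert_of_mem (mem_erase.2 ⟨hwv, h⟩)

lemma mem_flip_of_mem {S : Finset ℤ} {v x : ℤ} (hx : x ∈ S) (h1 : x ≠ v) :
    x ∈ flip S v := mem_insert_of_mem (mem_erase.2 ⟨h1, hx⟩)

lemma mem_of_mem_flip {S : Finset ℤ} {v x : ℤ} (hx : x ∈ flip S v) (h1 : x ≠ -v) : x ∈ S := by
  rcases mem_insert.1 hx with h | h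
  · omega
  · exact mem_of_mem_erase h

lemma not_mem_flip_self {S : Finset ℤ} {v : ℤ} (hv : v ≠ 0) : v ∉ flip S v := by
  simp only [flip, mem_insert, mem_erase]
  push_neg
  exact ⟨by omega, fun h => absurd rfl h⟩

/-! ### Lemma A -/

lemma lemA {H : Cls} (hU : UHit H) {v : ℤ} {Cv D : Finset ℤ}
    (h1 : ldeg H v = 1) (hCv : Cv ∈ H) (hvCv : v ∈ Cv) (hD : D ∈ H) (hvD : -v ∈ D)
    {y : ℤ} (hy : y ∈ Cv) (hyD : -y ∈ D) : y = v := by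
  by_contra hne
  have hclH := hU.1
  have hcCv : IsClause Cv := hclH _ hCv
  have hcD : IsClause D := hclH _ hD
  have hv0 : v ≠ 0 := clause_ne_zero hcCv hvCv
  set Ψ := extT (neg D) (cvar H) with hΨdef
  have hΨcl : IsClause Ψ := extT_clause (isClause_neg hcD) (fun w hw => cvar_pos hclH hw)
  have hΨtot : ∀ w ∈ cvar H, w ∈ Ψ ∨ -w ∈ Ψ := extT_total
  have hDΨ : Falsifies Ψ D := fun x hx => extT_subset (mem_neg.2 (by simpa using hx))
  set Ψ' := flip Ψ v with hΨ'def
  have hvΨ : v ∈ Ψ := extT_subset (mem_neg.2 (by simpa using hvD))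
  have hΨ'cl : IsClause Ψ' := flip_clause hΨcl hv0 hvΨ
  obtain ⟨E, hE, hEf⟩ := exists_falsified hU hΨ'cl (flip_total hΨtot hv0)
  have hECv : E ≠ Cv := by
    rintro rfl
    have h1' : -y ∈ Ψ' := hEf y hy
    have h2' : y ∈ Ψ := extT_subset (mem_neg.2 hyD)
    have h3' : y ∈ Ψ' := mem_flip_of_mem h2' hne
    exact hΨ'cl.2 y h3' h1'
  have hvE : v ∉ E := fun h => hECv (unique_of_ldeg_one h1 hE h hCv hvCv)
  have hnvE : -v ∉ E := by
    intro h
    have := hEf _ h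
    simp only [neg_neg] at this
    exact not_mem_flip_self hv0 this
  have hEΨ : Falsifies Ψ E := by
    intro x hx
    have hx' := hEf x hx
    apply mem_of_mem_flip hx'
    intro h
    exact hvE (by rwa [show x = v by omega] at hx)
  have : E = D := falsified_unique hU.2.1 hΨcl hE hD hEΨ hDΨ
  subst this
  exact hnvE hvD

/-! ### Lemma B: a 1-singular variable in a UHit forms an fs-pair -/

lemma lemB_sub {H : Cls} (hU : UHit H) {v : ℤ} {C₁ C₂ : Finset ℤ}
    (h1 : ldeg H v = 1) (h2 : ldeg H (-v) = 1)
    (hC1 : C₁ ∈ H) (hv1 : v ∈ C₁) (hC2 : C₂ ∈ H) (hv2 : -v ∈ C₂) :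
    C₂.erase (-v) ⊆ C₁.erase v := by
  intro b hb
  have hclH := hU.1
  have hcC1 : IsClause C₁ := hclH _ hC1
  have hcC2 : IsClause C₂ := hclH _ hC2
  have hv0 : v ≠ 0 := clause_ne_zero hcC1 hv1
  obtain ⟨hbne, hbC2⟩ := mem_erase.1 hb
  have hbnv : b ≠ v := by rintro rfl; exact hcC2.2 b hbC2 (by simpa using hv2)
  have hb0 : b ≠ 0 := clause_ne_zero hcC2 hbC2
  suffices hbC1 : b ∈ C₁ by exact mem_erase.2 ⟨hbnv, hbC1⟩
  by_cases hnbC1 : -b ∈ C₁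
  · exfalso
    have := lemA hU h1 hC1 hv1 hC2 hv2 hnbC1 (show -(-b) ∈ C₂ by simpa using hbC2)
    omega
  by_contra hbC1
  -- Ψ total ⊇ {b} ∪ ¬C₁
  have hS0cl : IsClause (insert b (neg C₁)) := by
    apply isClause_insert (isClause_neg hcC1) hb0
    · rw [mem_neg]; exact hnbC1
    · rw [mem_neg]; simpa using hbC1
  set Ψ := extT (insert b (neg C₁)) (cvar H) with hΨdef
  have hΨcl : IsClause Ψ := extT_clause hS0cl (fun w hw => cvar_pos hclH hw)
  have hΨtot : ∀ w ∈ cvar H, w ∈ Ψ ∨ -w ∈ Ψ := extT_total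
  have hC1Ψ : Falsifies Ψ C₁ := fun x hx =>
    extT_subset (mem_insert_of_mem (mem_neg.2 (by simpa using hx)))
  have hbΨ : b ∈ Ψ := extT_subset (mem_insert_self _ _)
  -- flip -v (which is in Ψ) to v
  set Ψ' := flip Ψ (-v) with hΨ'def
  have hnvΨ : -v ∈ Ψ := hC1Ψ v hv1
  have hΨ'cl : IsClause Ψ' := flip_clause hΨcl (by omega) hnvΨ
  obtain ⟨E, hE, hEf⟩ := exists_falsified hU hΨ'cl (flip_total hΨtot (by omega))
  have hEC1 : E ≠ C₁ := by
    rintro rfl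
    have : -v ∈ Ψ' := hEf v hv1
    exact not_mem_flip_self (by omega : (-v : ℤ) ≠ 0) this
  have hvE : v ∉ E := fun h => hEC1 (unique_of_ldeg_one h1 hE h hC1 hv1)
  have hnvE : -v ∈ E := by
    by_contra hnvE
    have hEΨ : Falsifies Ψ E := by
      intro x hx
      apply mem_of_mem_flip (hEf x hx)
      simp only [neg_neg]
      intro h
      exact hnvE (by rwa [show x = -v by omega] at hx)
    exact hEC1 (falsified_unique hU.2.1 hΨcl hE hC1 hEΨ hC1Ψ)
  have hEC2 : E = C₂ := unique_of_ldeg_one h2 hE hnvE hC2 hv2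
  subst hEC2
  -- b ∈ E falsified by Ψ': -b ∈ Ψ', but b ∈ Ψ' too
  have h1' : -b ∈ Ψ' := hEf b hbC2
  have h2' : -b ∈ Ψ := by
    apply mem_of_mem_flip h1'
    simp only [neg_neg]
    omega
  exact hΨcl.2 b hbΨ h2'

lemma lemB {H : Cls} (hU : UHit H) {v : ℤ} {C₁ C₂ : Finset ℤ}
    (h1 : ldeg H v = 1) (h2 : ldeg H (-v) = 1)
    (hC1 : C₁ ∈ H) (hv1 : v ∈ C₁) (hC2 : C₂ ∈ H) (hv2 : -v ∈ C₂) :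
    C₁.erase v = C₂.erase (-v) := by
  apply Subset.antisymm
  · have := lemB_sub hU (v := -v) h2 (by simpa using h1) hC2 hv2 hC1 (by simpa using hv1)
    simpa using this
  · exact lemB_sub hU h1 h2 hC1 hv1 hC2 hv2

end Stmt3Aux

namespace Stmt3Aux

open Finset

/-! ### The singular DP elimination step -/

lemma step {H : Cls} {v : ℤ} {Cv : Finset ℤ} (hU : UHit H)
    (hCv : Cv ∈ H) (hvCv : v ∈ Cv) (h1 : ldeg H v = 1) (h2 : 2 ≤ ldeg H (-v)) :
    ∃ H' : Cls, UHit H' ∧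
      H'.card + 1 = H.card ∧
      cvar H' = (cvar H).erase |v| ∧
      (∀ x : ℤ, |x| ≠ |v| → x ∉ Cv → ldeg H' x = ldeg H x) ∧
      (∀ x ∈ Cv, x ≠ v → 2 ≤ ldeg H' x) ∧
      singSet H' ⊆ (singSet H).erase |v| ∧
      (∀ w : ℤ, ldeg H' w = 1 → ldeg H' (-w) = 1 →
        ldeg H w = 1 ∧ ldeg H (-w) = 1) := by
  have hclH := hU.1
  have hHit := hU.2.1
  have hcCv : IsClause Cv := hclH _ hCv
  have hv0 : v ≠ 0 := clause_ne_zero hcCv hvCv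
  have hnvCv : -v ∉ Cv := hcCv.2 v hvCv
  set U := H.filter (fun E => v ∉ E ∧ -v ∉ E) with hUdef
  set Ds := H.filter (fun E => -v ∈ E) with hDsdef
  set res := fun D : Finset ℤ => (Cv.erase v) ∪ (D.erase (-v)) with hresdef
  set H' := U ∪ Ds.image res with hH'def
  have hUsub : U ⊆ H := filter_subset _ _
  have hDssub : Ds ⊆ H := filter_subset _ _
  have huniq : ∀ E ∈ H, v ∈ E → E = Cv := fun E hE hvE =>
    unique_of_ldeg_one h1 hE hvE hCv hvCv
  have hk : 2 ≤ Ds.card := h2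
  have hCvU : Cv ∉ U := by simp [hUdef, mem_filter, hvCv]
  have hCvDs : Cv ∉ Ds := by simp [hDsdef, mem_filter, hnvCv]
  have hUD : Disjoint U Ds := by
    rw [disjoint_left]
    intro E hE1 hE2
    exact (mem_filter.1 hE1).2.2 (mem_filter.1 hE2).2
  have hpart : ∀ E ∈ H, E = Cv ∨ E ∈ U ∨ E ∈ Ds := by
    intro E hE
    by_cases ha : -v ∈ E
    · exact Or.inr (Or.inr (mem_filter.2 ⟨hE, ha⟩))
    by_cases hb : v ∈ E
    · exact Or.inl (huniq E hE hb)
    · exact Or.inr (Or.inl (mem_filter.2 ⟨hE, hb, ha⟩))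
  have hDsH : ∀ D ∈ Ds, D ∈ H ∧ -v ∈ D := fun D hD =>
    ⟨(mem_filter.1 hD).1, (mem_filter.1 hD).2⟩
  have hresCl : ∀ D ∈ Ds, IsClause (res D) := by
    intro D hD
    obtain ⟨hDH, hnvD⟩ := hDsH D hD
    have hcD : IsClause D := hclH _ hDH
    constructor
    · intro h0
      rcases mem_union.1 h0 with h | h
      · exact hcCv.1 (mem_of_mem_erase h)
      · exact hcD.1 (mem_of_mem_erase h)
    · intro x hx hnx
      rcases mem_union.1 hx with hx | hx <;> rcases mem_union.1 hnx with hnx | hnx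
      · exact hcCv.2 x (mem_of_mem_erase hx) (mem_of_mem_erase hnx)
      · have := lemA hU h1 hCv hvCv hDH hnvD (mem_of_mem_erase hx)
          (by simpa using mem_of_mem_erase hnx)
        exact (mem_erase.1 hx).1 this
      · have := lemA hU h1 hCv hvCv hDH hnvD (mem_of_mem_erase hnx)
          (by simpa using mem_of_mem_erase hx)
        exact (mem_erase.1 hx).1 (by omega)
      · exact hcD.2 x (mem_of_mem_erase hx) (mem_of_mem_erase hnx)
  have hnv_res : ∀ D ∈ Ds, v ∉ res D ∧ -v ∉ res D := by
    intro D hD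
    obtain ⟨hDH, hnvD⟩ := hDsH D hD
    constructor
    · intro h
      rcases mem_union.1 h with h | h
      · exact (mem_erase.1 h).1 rfl
      · exact hCvDs (huniq D hDH (mem_of_mem_erase h) ▸ hD)
    · intro h
      rcases mem_union.1 h with h | h
      · exact hnvCv (mem_of_mem_erase h)
      · exact (mem_erase.1 h).1 rfl
  have hclash : ∀ D ∈ Ds, ∀ D' ∈ Ds, D ≠ D' →
      ∃ x, x ∈ D.erase (-v) ∧ -x ∈ D'.erase (-v) := by
    intro D hD D' hD' hne
    obtain ⟨hDH, hnvD⟩ := hDsH D hD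
    obtain ⟨hD'H, hnvD'⟩ := hDsH D' hD'
    obtain ⟨x, hx1, hx2⟩ := hHit D hDH D' hD'H hne
    have hxnv : x ≠ -v := by
      rintro rfl
      simp only [neg_neg] at hx2
      exact hCvDs (huniq D' hD'H hx2 ▸ hD')
    have hxv : x ≠ v := by
      rintro rfl
      exact hCvDs (huniq D hDH hx1 ▸ hD)
    exact ⟨x, mem_erase.2 ⟨hxnv, hx1⟩, mem_erase.2 ⟨by omega, hx2⟩⟩
  have hres_ne : ∀ D ∈ Ds, ∀ D' ∈ Ds, D ≠ D' → res D ≠ res D' := by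
    intro D hD D' hD' hne heq
    obtain ⟨x, hx1, hx2⟩ := hclash D hD D' hD' hne
    have h1' : x ∈ res D := mem_union_right _ hx1
    have h2' : -x ∈ res D := heq ▸ mem_union_right _ hx2
    exact (hresCl D hD).2 x h1' h2'
  have hresU : ∀ D ∈ Ds, res D ∉ U := by
    intro D hD hmem
    obtain ⟨hDH, hnvD⟩ := hDsH D hD
    have hresH : res D ∈ H := hUsub hmem
    have hne : D ≠ res D := by
      intro h
      exact (hnv_res D hD).2 (h ▸ hnvD)
    obtain ⟨x, hx1, hx2⟩ := hHit D hDH (res D) hresH hne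
    have hxnv : x ≠ -v := by
      rintro rfl
      simp only [neg_neg] at hx2
      exact (hnv_res D hD).1 hx2
    have : x ∈ res D := mem_union_right _ (mem_erase.2 ⟨hxnv, hx1⟩)
    exact (hresCl D hD).2 x this hx2
  have hUim : Disjoint U (Ds.image res) := by
    rw [disjoint_left]
    intro E hE1 hE2
    obtain ⟨D, hD, rfl⟩ := mem_image.1 hE2
    exact hresU D hD hE1
  -- clause set
  have hH'cl : IsClauseSet H' := by
    intro E hE
    rcases mem_union.1 hE with h | h
    · exact hclH _ (hUsub h)
    · obtain ⟨D, hD, rfl⟩ := mem_image.1 h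
      exact hresCl D hD
  -- hitting
  have hHit' : Hitting H' := by
    intro A hA B hB hne
    rcases mem_union.1 hA with hA' | hA' <;> rcases mem_union.1 hB with hB' | hB'
    · exact hHit A (hUsub hA') B (hUsub hB') hne
    · obtain ⟨D, hD, rfl⟩ := mem_image.1 hB'
      obtain ⟨hDH, hnvD⟩ := hDsH D hD
      have hAU := (mem_filter.1 hA').2
      have hne2 : A ≠ D := by rintro rfl; exact hAU.2 hnvD
      obtain ⟨x, hx1, hx2⟩ := hHit A (hUsub hA') D hDH hne2
      have : -x ≠ -v := by rintro h; rw [show x = v by omega] at hx1; exact hAU.1 hx1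
      exact ⟨x, hx1, mem_union_right _ (mem_erase.2 ⟨this, hx2⟩)⟩
    · obtain ⟨D, hD, rfl⟩ := mem_image.1 hA'
      obtain ⟨hDH, hnvD⟩ := hDsH D hD
      have hBU := (mem_filter.1 hB').2
      have hne2 : D ≠ B := by rintro rfl; exact hBU.2 hnvD
      obtain ⟨x, hx1, hx2⟩ := hHit D hDH B (hUsub hB') hne2
      have hxnv : x ≠ -v := by
        rintro rfl; simp only [neg_neg] at hx2; exact hBU.1 hx2
      exact ⟨x, mem_union_right _ (mem_erase.2 ⟨hxnv, hx1⟩), hx2⟩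
    · obtain ⟨D, hD, rfl⟩ := mem_image.1 hA'
      obtain ⟨D', hD', rfl⟩ := mem_image.1 hB'
      have hne2 : D ≠ D' := by rintro rfl; exact hne rfl
      obtain ⟨x, hx1, hx2⟩ := hclash D hD D' hD' hne2
      exact ⟨x, mem_union_right _ hx1, mem_union_right _ hx2⟩
  -- unsat
  have hUnsat' : ¬ Sat H' := by
    rintro ⟨S, hS, hsat⟩
    set S₀ := S.filter (fun x => x ≠ v ∧ x ≠ -v) with hS₀def
    have hS₀cl : IsClause S₀ := isClause_subset hS (filter_subset _ _)
    have hvS₀ : v ∉ S₀ := by simp [hS₀def, mem_filter]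
    have hnvS₀ : -v ∉ S₀ := by simp [hS₀def, mem_filter]
    have hS₀sat : ∀ E ∈ H', (S₀ ∩ E).Nonempty := by
      intro E hE
      obtain ⟨x, hx⟩ := hsat E hE
      obtain ⟨hxS, hxE⟩ := mem_inter.1 hx
      have hxv : x ≠ v ∧ x ≠ -v := by
        rcases mem_union.1 hE with h | h
        · have := (mem_filter.1 h).2
          constructor <;> rintro rfl
          · exact this.1 hxE
          · exact this.2 hxE
        · obtain ⟨D, hD, rfl⟩ := mem_image.1 h
          constructor <;> rintro rfl
          · exact (hnv_res D hD).1 hxE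
          · exact (hnv_res D hD).2 hxE
      exact ⟨x, mem_inter.2 ⟨mem_filter.2 ⟨hxS, hxv⟩, hxE⟩⟩
    by_cases hmeet : (S₀ ∩ Cv.erase v).Nonempty
    · apply hU.2.2
      refine ⟨insert (-v) S₀, isClause_insert hS₀cl (by omega) hnvS₀ (by simpa using hvS₀), ?_⟩
      intro E hE
      rcases hpart E hE with rfl | hE' | hE'
      · obtain ⟨x, hx⟩ := hmeet
        obtain ⟨hx1, hx2⟩ := mem_inter.1 hx
        exact ⟨x, mem_inter.2 ⟨mem_insert_of_mem hx1, mem_of_mem_erase hx2⟩⟩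
      · obtain ⟨x, hx⟩ := hS₀sat E (mem_union_left _ hE')
        obtain ⟨hx1, hx2⟩ := mem_inter.1 hx
        exact ⟨x, mem_inter.2 ⟨mem_insert_of_mem hx1, hx2⟩⟩
      · exact ⟨-v, mem_inter.2 ⟨mem_insert_self _ _, (hDsH E hE').2⟩⟩
    · apply hU.2.2
      refine ⟨insert v S₀, isClause_insert hS₀cl hv0 hvS₀ hnvS₀, ?_⟩
      intro E hE
      rcases hpart E hE with rfl | hE' | hE'
      · exact ⟨v, mem_inter.2 ⟨mem_insert_self _ _, hvCv⟩⟩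
      · obtain ⟨x, hx⟩ := hS₀sat E (mem_union_left _ hE')
        obtain ⟨hx1, hx2⟩ := mem_inter.1 hx
        exact ⟨x, mem_inter.2 ⟨mem_insert_of_mem hx1, hx2⟩⟩
      · obtain ⟨x, hx⟩ := hS₀sat (res E) (mem_union_right _ (mem_image_of_mem _ hE'))
        obtain ⟨hx1, hx2⟩ := mem_inter.1 hx
        rcases mem_union.1 hx2 with h | h
        · exact absurd ⟨x, mem_inter.2 ⟨hx1, h⟩⟩ hmeet
        · exact ⟨x, mem_inter.2 ⟨mem_insert_of_mem hx1, mem_of_mem_erase h⟩⟩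
  -- partition of H
  have hHeq : H = insert Cv (U ∪ Ds) := by
    ext E
    constructor
    · intro hE
      rcases hpart E hE with rfl | h | h
      · exact mem_insert_self _ _
      · exact mem_insert_of_mem (mem_union_left _ h)
      · exact mem_insert_of_mem (mem_union_right _ h)
    · intro hE
      rcases mem_insert.1 hE with rfl | h
      · exact hCv
      · rcases mem_union.1 h with h | h
        · exact hUsub h
        · exact hDssub h
  -- cardinality
  have hcard : H'.card + 1 = H.card := by
    have h1' : H.card = (U ∪ Ds).card + 1 := by
      rw [hHeq, card_insert_of_notMem]
      intro h
      rcases mem_union.1 h with h | h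
      · exact hCvU h
      · exact hCvDs h
    have h2' : (U ∪ Ds).card = U.card + Ds.card := card_union_of_disjoint hUD
    have h3' : H'.card = U.card + Ds.card := by
      rw [hH'def, card_union_of_disjoint hUim,
        card_image_of_injOn (fun D hD D' hD' h => by
          by_contra hne
          exact hres_ne D hD D' hD' hne h)]
    omega
  -- Ds nonempty
  have hDsne : Ds.Nonempty := card_pos.1 (by omega)
  -- cvar
  have habs_ne : ∀ x : ℤ, |x| = |v| → x = v ∨ x = -v := fun x hx => abs_eq_abs.1 hx
  have hcvar : cvar H' = (cvar H).erase |v| := by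
    ext w
    constructor
    · intro hw
      obtain ⟨E, hE, x, hx, rfl⟩ := mem_cvar.1 hw
      have hxv : x ≠ v ∧ x ≠ -v := by
        rcases mem_union.1 hE with h | h
        · have := (mem_filter.1 h).2
          constructor <;> rintro rfl
          · exact this.1 hx
          · exact this.2 hx
        · obtain ⟨D, hD, rfl⟩ := mem_image.1 h
          constructor <;> rintro rfl
          · exact (hnv_res D hD).1 hx
          · exact (hnv_res D hD).2 hx
      refine mem_erase.2 ⟨?_, ?_⟩
      · intro habs
        rcases habs_ne x habs with rfl | rfl
        · exact hxv.1 rfl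
        · exact hxv.2 rfl
      · rcases mem_union.1 hE with h | h
        · exact abs_mem_cvar (hUsub h) hx
        · obtain ⟨D, hD, rfl⟩ := mem_image.1 h
          rcases mem_union.1 hx with h' | h'
          · exact abs_mem_cvar hCv (mem_of_mem_erase h')
          · exact abs_mem_cvar (hDsH D hD).1 (mem_of_mem_erase h')
    · intro hw
      obtain ⟨hwv, hw⟩ := mem_erase.1 hw
      obtain ⟨E, hE, x, hx, rfl⟩ := mem_cvar.1 hw
      have hxv : x ≠ v := by rintro rfl; exact hwv rfl
      have hxnv : x ≠ -v := by rintro rfl; exact hwv (abs_neg v)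
      rcases hpart E hE with rfl | h | h
      · obtain ⟨D₀, hD₀⟩ := hDsne
        exact mem_cvar.2 ⟨res D₀, mem_union_right _ (mem_image_of_mem _ hD₀),
          x, mem_union_left _ (mem_erase.2 ⟨hxv, hx⟩), rfl⟩
      · exact mem_cvar.2 ⟨E, mem_union_left _ h, x, hx, rfl⟩
      · exact mem_cvar.2 ⟨res E, mem_union_right _ (mem_image_of_mem _ h),
          x, mem_union_right _ (mem_erase.2 ⟨hxnv, hx⟩), rfl⟩
  -- degree formulas
  have hldegH : ∀ x : ℤ, ldeg H x =
      (U.filter (fun E => x ∈ E)).card + ((if x ∈ Cv then 1 else 0) +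
        (Ds.filter (fun E => x ∈ E)).card) := by
    intro x
    have : ldeg H x = ldeg (insert Cv (U ∪ Ds)) x := by rw [← hHeq]
    rw [this, ldeg_insert (by
      intro h
      rcases mem_union.1 h with h | h
      · exact hCvU h
      · exact hCvDs h), ldeg_union hUD]
    simp only [ldeg]
    split_ifs <;> omega
  have hfilter_im : ∀ x : ℤ, ((Ds.image res).filter (fun E => x ∈ E)) =
      (Ds.filter (fun D => x ∈ res D)).image res := by
    intro x
    ext E
    simp only [mem_filter, mem_image]
    constructor
    · rintro ⟨⟨D, hD, rfl⟩, hx⟩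
      exact ⟨D, ⟨hD, hx⟩, rfl⟩
    · rintro ⟨D, ⟨hD1, hD2⟩, rfl⟩
      exact ⟨⟨D, hD1, rfl⟩, hD2⟩
  have hldegH' : ∀ x : ℤ, ldeg H' x =
      (U.filter (fun E => x ∈ E)).card + (Ds.filter (fun D => x ∈ res D)).card := by
    intro x
    have hdisj2 : Disjoint (U.filter (fun E => x ∈ E))
        ((Ds.image res).filter (fun E => x ∈ E)) :=
      disjoint_filter_filter hUim
    rw [show ldeg H' x = ((U.filter (fun E => x ∈ E)).card +
        ((Ds.image res).filter (fun E => x ∈ E)).card) by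
      simp only [ldeg, hH'def, filter_union]
      exact card_union_of_disjoint hdisj2]
    rw [hfilter_im x, card_image_of_injOn (fun D hD D' hD' h => by
      by_contra hne
      exact hres_ne D (mem_of_mem_filter _ hD) D' (mem_of_mem_filter _ hD') hne h)]
  have hmem_res : ∀ x : ℤ, x ≠ v → x ≠ -v → ∀ D ∈ Ds, (x ∈ res D ↔ x ∈ Cv ∨ x ∈ D) := by
    intro x hxv hxnv D hD
    simp only [hresdef, mem_union, mem_erase]
    constructor
    · rintro (⟨-, h⟩ | ⟨-, h⟩)
      · exact Or.inl h
      · exact Or.inr h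
    · rintro (h | h)
      · exact Or.inl ⟨hxv, h⟩
      · exact Or.inr ⟨hxnv, h⟩
  -- f2 : untouched degrees
  have hf2 : ∀ x : ℤ, |x| ≠ |v| → x ∉ Cv → ldeg H' x = ldeg H x := by
    intro x hxa hxCv
    have hxv : x ≠ v := by rintro rfl; exact hxa rfl
    have hxnv : x ≠ -v := by rintro rfl; exact hxa (abs_neg v)
    rw [hldegH', hldegH]
    have : Ds.filter (fun D => x ∈ res D) = Ds.filter (fun D => x ∈ D) := by
      apply filter_congr
      intro D hD
      rw [hmem_res x hxv hxnv D hD]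
      simp [hxCv]
    rw [this, if_neg hxCv]
    omega
  -- f1 : degrees of Cv-literals become ≥ 2
  have hf1 : ∀ x ∈ Cv, x ≠ v → 2 ≤ ldeg H' x := by
    intro x hxCv hxv
    have hxnv : x ≠ -v := by rintro rfl; exact hnvCv hxCv
    rw [hldegH']
    have : Ds.filter (fun D => x ∈ res D) = Ds := by
      apply filter_true_of_mem
      intro D hD
      rw [hmem_res x hxv hxnv D hD]
      exact Or.inl hxCv
    rw [this]
    omega
  -- degrees of ±v vanish
  have hldegv : ldeg H' v = 0 ∧ ldeg H' (-v) = 0 := by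
    constructor <;> apply ldeg_eq_zero <;> intro E hE
    · rcases mem_union.1 hE with h | h
      · exact (mem_filter.1 h).2.1
      · obtain ⟨D, hD, rfl⟩ := mem_image.1 h
        exact (hnv_res D hD).1
    · rcases mem_union.1 hE with h | h
      · exact (mem_filter.1 h).2.2
      · obtain ⟨D, hD, rfl⟩ := mem_image.1 h
        exact (hnv_res D hD).2
  -- positivity of degrees in H for literals of Cv
  have hpos : ∀ x ∈ Cv, 1 ≤ ldeg H x := by
    intro x hx
    exact ldeg_pos_iff.2 ⟨Cv, hCv, hx⟩
  -- singular sets shrink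
  have hsing : singSet H' ⊆ (singSet H).erase |v| := by
    intro w hw
    obtain ⟨hw1, hw2⟩ := mem_singSet.1 hw
    rw [hcvar] at hw1
    obtain ⟨hwv, hwH⟩ := mem_erase.1 hw1
    have hwpos : 0 < w := cvar_pos hclH hwH
    have hwv1 : w ≠ v := by
      rintro rfl
      exact hwv (abs_of_pos hwpos).symm
    have hwv2 : w ≠ -v := by
      rintro rfl
      exact hwv (abs_of_neg (by omega : v < 0)).symm
    refine mem_erase.2 ⟨hwv, mem_singSet.2 ⟨hwH, ?_⟩⟩
    have key : ∀ y : ℤ, y ≠ v → y ≠ -v → ldeg H' y = 1 →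
        1 ≤ ldeg H' (-y) → ldeg H y = 1 ∧ 1 ≤ ldeg H (-y) := by
      intro y hyv hynv hy1 hy2
      have hyCv : y ∉ Cv := by
        intro h
        have := hf1 y h hyv
        omega
      have hya : |y| ≠ |v| := by
        intro h
        rcases habs_ne y h with rfl | rfl
        · exact hyv rfl
        · exact hynv rfl
      have he1 : ldeg H y = 1 := by rw [← hf2 y hya hyCv]; exact hy1
      refine ⟨he1, ?_⟩
      by_cases hnyCv : -y ∈ Cv
      · exact hpos _ hnyCv
      · have : |(-y)| ≠ |v| := by rwa [abs_neg]
        rw [← hf2 (-y) this hnyCv]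
        exact hy2
    rcases Nat.le_total (ldeg H' w) (ldeg H' (-w)) with hle | hle
    · rw [min_eq_left hle] at hw2
      obtain ⟨ha2, hb2⟩ := key w hwv1 hwv2 hw2 (by omega)
      rw [min_eq_left (by omega)]
      exact ha2
    · rw [min_eq_right hle] at hw2
      obtain ⟨ha2, hb2⟩ := key (-w) (by omega) (by omega) hw2
        (by simp only [neg_neg]; omega)
      simp only [neg_neg] at ha2 hb2
      rw [min_eq_right (by omega)]
      exact ha2
  -- no new 1-singular variables
  have h1s : ∀ w : ℤ, ldeg H' w = 1 → ldeg H' (-w) = 1 →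
      ldeg H w = 1 ∧ ldeg H (-w) = 1 := by
    intro w ha hb
    have hwv1 : w ≠ v := by rintro rfl; have := hldegv.1; omega
    have hwv2 : w ≠ -v := by rintro rfl; have := hldegv.2; omega
    have hwCv : w ∉ Cv := fun h => by have := hf1 w h hwv1; omega
    have hnwCv : -w ∉ Cv := fun h => by have := hf1 (-w) h (by omega); omega
    have hwa : |w| ≠ |v| := fun h => by
      rcases habs_ne w h with rfl | rfl
      · exact hwv1 rfl
      · exact hwv2 rfl
    constructor
    · rw [← hf2 w hwa hwCv]; exact ha
    · rw [← hf2 (-w) (by rwa [abs_neg]) hnwCv]; exact hb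
  exact ⟨H', ⟨hH'cl, hHit', hUnsat'⟩, hcard, hcvar, hf2, hf1, hsing, h1s⟩

end Stmt3Aux

namespace Stmt3Aux

open Finset

/-! ### Iterated reduction to a nonsingular UHit -/

lemma uhit_nonempty {H : Cls} (hU : UHit H) : H.Nonempty := by
  rcases H.eq_empty_or_nonempty with rfl | h
  · exact absurd ⟨∅, ⟨by simp, by simp⟩, by simp⟩ hU.2.2
  · exact h

lemma reduce : ∀ n : ℕ, ∀ H : Cls, (singSet H).card ≤ n → UHit H →
    (∀ w : ℤ, ¬(ldeg H w = 1 ∧ ldeg H (-w) = 1)) →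
    ∃ K : Cls, UHit K ∧ Nonsingular K ∧ deficiency K = deficiency H ∧
      nvar H ≤ nvar K + (singSet H).card := by
  intro n
  induction n with
  | zero =>
    intro H hcard hU h1s
    refine ⟨H, hU, ?_, rfl, by omega⟩
    apply nonsingular_of_singSet_empty
    exact card_eq_zero.1 (by omega)
  | succ n ih =>
    intro H hcard hU h1s
    by_cases hns : singSet H = ∅
    · exact ⟨H, hU, nonsingular_of_singSet_empty hns, rfl, by omega⟩
    obtain ⟨w, hw⟩ := nonempty_of_ne_empty hns
    obtain ⟨hwc, hwm⟩ := mem_singSet.1 hw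
    have hwpos : 0 < w := cvar_pos hU.1 hwc
    -- pick the literal of degree one
    obtain ⟨y, hy1, hy2, hyabs⟩ :
        ∃ y : ℤ, ldeg H y = 1 ∧ 2 ≤ ldeg H (-y) ∧ |y| = w := by
      rcases Nat.le_total (ldeg H w) (ldeg H (-w)) with hle | hle
      · rw [min_eq_left hle] at hwm
        have h2 : ldeg H (-w) ≠ 1 := fun h => h1s w ⟨hwm, h⟩
        exact ⟨w, hwm, by omega, abs_of_pos hwpos⟩
      · rw [min_eq_right hle] at hwm
        have h2 : ldeg H w ≠ 1 := fun h => h1s w ⟨h, hwm⟩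
        exact ⟨-w, hwm, by simpa using (by omega : 2 ≤ ldeg H w), by
          rw [abs_neg, abs_of_pos hwpos]⟩
    obtain ⟨Cv, hCv, hyCv⟩ := exists_of_ldeg_one hy1
    obtain ⟨H', hU', hcard', hcvar', hf2', hf1', hsing', h1s'⟩ :=
      step hU hCv hyCv hy1 hy2
    rw [hyabs] at hcvar' hsing'
    have hsub : singSet H' ⊆ (singSet H).erase w := hsing'
    have hcardless : (singSet H').card ≤ n := by
      have h1' : (singSet H').card ≤ ((singSet H).erase w).card := card_le_card hsub
      have h2' : ((singSet H).erase w).card = (singSet H).card - 1 :=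
        card_erase_of_mem hw
      have h3' : 1 ≤ (singSet H).card := card_pos.2 ⟨w, hw⟩
      omega
    have h1s'' : ∀ u : ℤ, ¬(ldeg H' u = 1 ∧ ldeg H' (-u) = 1) := by
      rintro u ⟨ha, hb⟩
      exact h1s u (h1s' u ha hb)
    obtain ⟨K, hK1, hK2, hK3, hK4⟩ := ih H' hcardless hU' h1s''
    have hnv : nvar H' + 1 = nvar H := by
      rw [nvar, nvar, hcvar']
      exact card_erase_add_one hwc
    have hc : H'.card + 1 = H.card := hcard'
    refine ⟨K, hK1, hK2, ?_, ?_⟩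
    · rw [hK3]
      rw [deficiency, deficiency]
      have e1 : (H'.card : ℤ) = (H.card : ℤ) - 1 := by
        have := hc; push_cast [← this]; ring
      have e2 : (nvar H' : ℤ) = (nvar H : ℤ) - 1 := by
        have := hnv; push_cast [← this]; ring
      rw [e1, e2]; ring
    · have h3' : 1 ≤ (singSet H).card := card_pos.2 ⟨w, hw⟩
      have := card_le_card hsub
      have := card_erase_of_mem hw
      omega

end Stmt3Aux

namespace Stmt3Aux

open Finset

lemma min_abs_eq (F : Cls) (y : ℤ) :
    min (ldeg F |y|) (ldeg F (-|y|)) = min (ldeg F y) (ldeg F (-y)) := by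
  rcases abs_choice y with h | h
  · rw [h]
  · rw [h, neg_neg, min_comm]

lemma singular_abs {F : Cls} {y : ℤ} (hy : |y| ∈ cvar F)
    (h : min (ldeg F y) (ldeg F (-y)) = 1) : SingularVar F |y| :=
  ⟨hy, by rw [min_abs_eq]; exact h⟩

lemma def_step {H H' : Cls} (hc : H'.card + 1 = H.card) (hn : nvar H' + 1 = nvar H) :
    deficiency H' = deficiency H := by
  simp only [deficiency]
  omega

end Stmt3Aux

open Stmt3Aux Finset

/-- Bound on the number of variables of a nonsingular, not strictly fs-resolvable UHIT
admitting a nontrivial clause-factorisation. -/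
theorem stmt3 (F F₀ G : Cls) (C : Finset ℤ)
    (hU : UHit F) (hns : Nonsingular F)
    (hF₀ : IsClauseSet F₀) (hG : IsClauseSet G)
    (hC : C ∈ F₀) (hGu : ¬ Sat G)
    (hvdisj : Disjoint (C.image (fun x => |x|)) (cvar G))
    (hF₀nt : F₀ ≠ {∅}) (hGnt : G ≠ {∅})
    (hdisj : (F₀ \ {C}) ∩ G.image (fun D => C ∪ D) = ∅)
    (hF : F = (F₀ \ {C}) ∪ G.image (fun D => C ∪ D))
    (hnfs : ¬ StrictlyFsResolvable F)
    (N₀ N₁ : ℕ)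
    (hN₀ : ∀ H : Cls, UHit H → Nonsingular H → deficiency H = deficiency F₀ → nvar H ≤ N₀)
    (hN₁ : ∀ H : Cls, UHit H → Nonsingular H → deficiency H = deficiency G → nvar H ≤ N₁) :
    nvar F ≤ N₀ + N₁ + (cvar F₀ ∩ cvar G).card + 1 := by
  classical
  obtain ⟨hFcl, hFhit, hFuns⟩ := hU
  set F' := F₀ \ {C} with hF'def
  set P := G.image (fun D => C ∪ D) with hPdef
  have hCcl : IsClause C := hF₀ C hC
  -- separation of C from G
  have hsep : ∀ D ∈ G, ∀ x ∈ D, x ∉ C ∧ -x ∉ C := by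
    intro D hD x hx
    have hxG : |x| ∈ cvar G := abs_mem_cvar hD hx
    constructor <;> intro hxC
    · exact (disjoint_left.1 hvdisj) (mem_image_of_mem _ hxC) hxG
    · have : |(-x)| ∈ C.image (fun x => |x|) := mem_image_of_mem _ hxC
      rw [abs_neg] at this
      exact (disjoint_left.1 hvdisj) this hxG
  have hdisjFP : Disjoint F' P := disjoint_iff_inter_eq_empty.2 hdisj
  have hGne : G.Nonempty := by
    rcases G.eq_empty_or_nonempty with rfl | h
    · exact absurd ⟨∅, ⟨by simp, by simp⟩, by simp⟩ hGu
    · exact h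
  have hG2 : 2 ≤ G.card := by
    by_contra hlt
    push_neg at hlt
    interval_cases h : G.card
    · exact absurd (card_eq_zero.1 h ▸ hGne) (by simp)
    · obtain ⟨D, rfl⟩ := card_eq_one.1 h
      have hDne : D ≠ ∅ := fun h' => hGnt (by rw [h'])
      obtain ⟨d, hd⟩ := nonempty_iff_ne_empty.2 hDne
      have hcD : IsClause D := hG D (mem_singleton_self D)
      refine hGu ⟨{d}, ⟨?_, ?_⟩, ?_⟩
      · simp only [mem_singleton]
        rintro rfl
        exact hcD.1 hd
      · intro x hx hnx
        simp only [mem_singleton] at hx hnx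
        subst hx
        have : x = 0 := by omega
        subst this
        exact hcD.1 hd
      · intro E hE
        rw [mem_singleton] at hE
        subst hE
        exact ⟨d, mem_inter.2 ⟨mem_singleton_self d, hd⟩⟩
  have hinj : ∀ D₁ ∈ G, ∀ D₂ ∈ G, C ∪ D₁ = C ∪ D₂ → D₁ = D₂ := by
    intro D₁ h₁ D₂ h₂ heq
    apply Subset.antisymm <;> intro x hx
    · have : x ∈ C ∪ D₂ := heq ▸ mem_union_right _ hx
      rcases mem_union.1 this with h | h
      · exact absurd h (hsep D₁ h₁ x hx).1
      · exact h
    · have : x ∈ C ∪ D₁ := heq ▸ mem_union_right _ hx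
      rcases mem_union.1 this with h | h
      · exact absurd h (hsep D₂ h₂ x hx).1
      · exact h
  have hF'F : F' ⊆ F := hF ▸ subset_union_left
  have hPF : P ⊆ F := hF ▸ subset_union_right
  have hCPmem : ∀ D ∈ G, C ∪ D ∈ F := fun D hD => hPF (mem_image_of_mem _ hD)
  have hCF' : C ∉ F' := by simp [hF'def]
  have hF'sub : F' ⊆ F₀ := sdiff_subset
  have hF₀eq : F₀ = insert C F' := by
    rw [hF'def, sdiff_singleton_eq_erase, insert_erase hC]
  -- G is an unsatisfiable hitting clause-set
  have hGhit : Hitting G := by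
    intro D₁ h₁ D₂ h₂ hne
    have hne' : C ∪ D₁ ≠ C ∪ D₂ := fun h => hne (hinj D₁ h₁ D₂ h₂ h)
    obtain ⟨x, hx1, hx2⟩ := hFhit _ (hCPmem D₁ h₁) _ (hCPmem D₂ h₂) hne'
    rcases mem_union.1 hx1 with h | h
    · rcases mem_union.1 hx2 with h' | h'
      · exact absurd h' (hCcl.2 x h)
      · exact absurd h ((hsep D₂ h₂ (-x) h').2 (by simpa using h) |>.elim)
    · rcases mem_union.1 hx2 with h' | h'
      · exact absurd h' (hsep D₁ h₁ x h).2
      · exact ⟨x, h, h'⟩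
  have hGuhit : UHit G := ⟨hG, hGhit, hGu⟩
  -- F₀ is an unsatisfiable hitting clause-set
  have hTcl : ∀ E : Finset ℤ, IsClause E →
      IsClause ((neg E).filter (fun y => |y| ∈ cvar G)) := fun E hE =>
    isClause_subset (isClause_neg hE) (filter_subset _ _)
  have hhitCE : ∀ E ∈ F', ∃ x ∈ C, -x ∈ E := by
    intro E hE
    by_contra hcon
    push_neg at hcon
    apply hGu
    refine ⟨(neg E).filter (fun y => |y| ∈ cvar G), hTcl E (hFcl E (hF'F hE)), ?_⟩
    intro D hD
    have hne : C ∪ D ≠ E := by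
      intro h
      exact (disjoint_left.1 hdisjFP) hE (h ▸ mem_image_of_mem _ hD)
    obtain ⟨x, hx1, hx2⟩ := hFhit _ (hCPmem D hD) E (hF'F hE) hne
    rcases mem_union.1 hx1 with h | h
    · exact absurd hx2 (hcon x h)
    · exact ⟨x, mem_inter.2 ⟨mem_filter.2 ⟨Stmt3Aux.mem_neg.2 (by simpa using hx2),
        abs_mem_cvar hD h⟩, h⟩⟩
  have hhitEC : ∀ E ∈ F', ∃ x ∈ E, -x ∈ C := by
    intro E hE
    by_contra hcon
    push_neg at hcon
    apply hGu
    refine ⟨(neg E).filter (fun y => |y| ∈ cvar G), hTcl E (hFcl E (hF'F hE)), ?_⟩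
    intro D hD
    have hne : E ≠ C ∪ D := by
      intro h
      exact (disjoint_left.1 hdisjFP) hE (h ▸ mem_image_of_mem _ hD)
    obtain ⟨x, hx1, hx2⟩ := hFhit E (hF'F hE) _ (hCPmem D hD) hne
    rcases mem_union.1 hx2 with h | h
    · exact absurd h (hcon x hx1)
    · refine ⟨-x, mem_inter.2 ⟨mem_filter.2 ⟨Stmt3Aux.mem_neg.2 (by simpa using hx1), ?_⟩, h⟩⟩
      exact abs_mem_cvar hD h
  have hF₀hit : Hitting F₀ := by
    intro A hA B hB hne
    by_cases hAC : A = C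
    · subst hAC
      have hBF' : B ∈ F' := mem_sdiff.2 ⟨hB, by simpa using (Ne.symm hne)⟩
      exact hhitCE B hBF'
    by_cases hBC : B = C
    · subst hBC
      have hAF' : A ∈ F' := mem_sdiff.2 ⟨hA, by simpa using hAC⟩
      exact hhitEC A hAF'
    · exact hFhit A (hF'F (mem_sdiff.2 ⟨hA, by simpa using hAC⟩))
        B (hF'F (mem_sdiff.2 ⟨hB, by simpa using hBC⟩)) hne
  have hF₀uns : ¬ Sat F₀ := by
    rintro ⟨S, hS, hsat⟩
    apply hFuns
    refine ⟨S, hS, ?_⟩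
    intro E hE
    rw [hF] at hE
    rcases mem_union.1 hE with h | h
    · exact hsat E (hF'sub h)
    · obtain ⟨D, hD, rfl⟩ := mem_image.1 h
      obtain ⟨x, hx⟩ := hsat C hC
      obtain ⟨h1, h2⟩ := mem_inter.1 hx
      exact ⟨x, mem_inter.2 ⟨h1, mem_union_left _ h2⟩⟩
  have hF₀uhit : UHit F₀ := ⟨hF₀, hF₀hit, hF₀uns⟩
  -- degree decompositions
  have hldF : ∀ x : ℤ, ldeg F x = ldeg F' x + (if x ∈ C then G.card else ldeg G x) := by
    intro x
    have h1 : ldeg F x = ldeg F' x + ldeg P x := by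
      rw [hF]; exact ldeg_union hdisjFP x
    have h2 : P.filter (fun E => x ∈ E) =
        (G.filter (fun D => x ∈ C ∪ D)).image (fun D => C ∪ D) := by
      ext E
      simp only [hPdef, mem_filter, mem_image]
      constructor
      · rintro ⟨⟨D, hD, rfl⟩, hx⟩
        exact ⟨D, ⟨hD, hx⟩, rfl⟩
      · rintro ⟨D, ⟨hD1, hD2⟩, rfl⟩
        exact ⟨⟨D, hD1, rfl⟩, hD2⟩
    have h3 : ldeg P x = (G.filter (fun D => x ∈ C ∪ D)).card := by
      rw [ldeg, h2, card_image_of_injOn]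
      intro D hD D' hD' h
      exact hinj D (mem_of_mem_filter _ hD) D' (mem_of_mem_filter _ hD') h
    rw [h1, h3]
    congr 1
    by_cases hxC : x ∈ C
    · rw [if_pos hxC, filter_true_of_mem (fun D hD => mem_union_left _ hxC)]
    · rw [if_neg hxC, ldeg]
      congr 1
      apply filter_congr
      intro D hD
      simp [mem_union, hxC]
  have hldF₀ : ∀ x : ℤ, ldeg F₀ x = (if x ∈ C then 1 else 0) + ldeg F' x := by
    intro x
    rw [hF₀eq, ldeg_insert hCF']
  -- cvar relations
  have hcvP : cvar P = C.image (fun x => |x|) ∪ cvar G := by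
    ext w
    rw [mem_union]
    constructor
    · intro hw
      obtain ⟨E, hE, x, hx, rfl⟩ := mem_cvar.1 hw
      rw [hPdef] at hE
      obtain ⟨D, hD, rfl⟩ := mem_image.1 hE
      rcases mem_union.1 hx with h | h
      · exact Or.inl (mem_image_of_mem _ h)
      · exact Or.inr (abs_mem_cvar hD h)
    · rintro (hw | hw)
      · obtain ⟨x, hx, rfl⟩ := mem_image.1 hw
        obtain ⟨D₀, hD₀⟩ := hGne
        exact abs_mem_cvar (show C ∪ D₀ ∈ P from mem_image_of_mem _ hD₀)
          (mem_union_left _ hx)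
      · obtain ⟨D, hD, x, hx, rfl⟩ := mem_cvar.1 hw
        exact abs_mem_cvar (show C ∪ D ∈ P from mem_image_of_mem _ hD)
          (mem_union_right _ hx)
  have hcvF : cvar F = cvar F₀ ∪ cvar G := by
    rw [hF, cvar_union, hcvP, hF₀eq, cvar_insert]
    ext w
    simp only [mem_union]
    tauto
  have hcvF₀F : cvar F₀ ⊆ cvar F := hcvF ▸ subset_union_left
  have hcvGF : cvar G ⊆ cvar F := hcvF ▸ subset_union_right
  have hCimg : C.image (fun x => |x|) ⊆ cvar F₀ := by
    rw [hF₀eq, cvar_insert]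
    exact subset_union_left
  -- F has no fs-pairs
  have noFS : ∀ C₁ ∈ F, ∀ x ∈ C₁, insert (-x) (C₁.erase x) ∉ F := by
    intro C₁ hC₁ x hx hC₂mem
    have hcC₁ : IsClause C₁ := hFcl _ hC₁
    have hx0 : x ≠ 0 := clause_ne_zero hcC₁ hx
    have hnxC₁ : -x ∉ C₁ := hcC₁.2 x hx
    have hE₀eq : insert x (C₁.erase x) = C₁ := insert_erase hx
    have hxE₀ : x ∉ C₁.erase x := notMem_erase x C₁
    have hnxE₀ : -x ∉ C₁.erase x := fun h => hnxC₁ (mem_of_mem_erase h)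
    have hneq : C₁ ≠ insert (-x) (C₁.erase x) := by
      intro h
      exact hnxC₁ (h ▸ mem_insert_self _ _)
    have hE₀F : C₁.erase x ∉ F := by
      intro hmem
      have hne : C₁ ≠ C₁.erase x := by
        intro h
        exact hxE₀ (h ▸ hx)
      obtain ⟨y, hy1, hy2⟩ := hFhit C₁ hC₁ _ hmem hne
      exact hcC₁.2 y hy1 (mem_of_mem_erase hy2)
    by_cases habs : |x| ∈ cvar (F \ {insert x (C₁.erase x), insert (-x) (C₁.erase x)})
    · exact hnfs ⟨C₁.erase x, x, isClause_erase hcC₁ x, hx0, hxE₀, hnxE₀,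
        by rwa [hE₀eq], hC₂mem, hE₀F, habs⟩
    · apply hns |x|
      have honly : ∀ E ∈ F, (x ∈ E ∨ -x ∈ E) →
          E = C₁ ∨ E = insert (-x) (C₁.erase x) := by
        intro E hE hxE
        by_contra hcon
        push_neg at hcon
        apply habs
        refine mem_cvar.2 ⟨E, mem_sdiff.2 ⟨hE, ?_⟩, ?_⟩
        · simp only [mem_insert, mem_singleton]
          push_neg
          rw [hE₀eq]
          exact hcon
        · rcases hxE with h | h
          · exact ⟨x, h, rfl⟩
          · exact ⟨-x, h, abs_neg x⟩
      have hl1 : ldeg F x = 1 := by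
        have : F.filter (fun E => x ∈ E) = {C₁} := by
          ext E
          simp only [mem_filter, mem_singleton]
          constructor
          · rintro ⟨hE, hxE⟩
            rcases honly E hE (Or.inl hxE) with h | h
            · exact h
            · subst h
              rcases mem_insert.1 hxE with h | h
              · omega
              · exact absurd h hxE₀
          · rintro rfl
            exact ⟨hC₁, hx⟩
        rw [ldeg, this, card_singleton]
      have hl2 : ldeg F (-x) = 1 := by
        have : F.filter (fun E => -x ∈ E) = {insert (-x) (C₁.erase x)} := by
          ext E
          simp only [mem_filter, mem_singleton]
          constructor
          · rintro ⟨hE, hxE⟩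
            rcases honly E hE (Or.inr (by simpa using hxE)) with h | h
            · subst h
              exact absurd hxE hnxC₁
            · exact h
          · rintro rfl
            exact ⟨hC₂mem, mem_insert_self _ _⟩
        rw [ldeg, this, card_singleton]
      exact singular_abs (abs_mem_cvar hC₁ hx) (by rw [hl1, hl2]; rfl)
  -- G has no 1-singular variables
  have hG1s : ∀ w : ℤ, ¬(ldeg G w = 1 ∧ ldeg G (-w) = 1) := by
    rintro w ⟨ha, hb⟩
    obtain ⟨C₁, hC₁, hwC₁⟩ := exists_of_ldeg_one ha
    obtain ⟨C₂, hC₂, hwC₂⟩ := exists_of_ldeg_one hb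
    have hEq := lemB hGuhit ha hb hC₁ hwC₁ hC₂ hwC₂
    have hwC : w ∉ C := (hsep C₁ hC₁ w hwC₁).1
    have key : insert (-w) ((C ∪ C₁).erase w) = C ∪ C₂ := by
      rw [erase_union_distrib, erase_eq_of_notMem hwC, hEq, ← union_insert,
        insert_erase hwC₂]
    exact noFS (C ∪ C₁) (hCPmem C₁ hC₁) w (mem_union_right _ hwC₁)
      (by rw [key]; exact hCPmem C₂ hC₂)
  -- singular variables of G are shared
  have hGsing : singSet G ⊆ cvar F₀ ∩ cvar G := by
    intro w hw
    obtain ⟨hwc, hwm⟩ := mem_singSet.1 hw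
    refine mem_inter.2 ⟨?_, hwc⟩
    by_contra hnot
    have hwpos : 0 < w := cvar_pos hG hwc
    have hwC : w ∉ C := by
      intro h
      have := hCimg (mem_image_of_mem (fun x => |x|) h)
      simp only [abs_of_pos hwpos] at this
      exact hnot this
    have hnwC : -w ∉ C := by
      intro h
      have := hCimg (mem_image_of_mem (fun x => |x|) h)
      simp only [abs_neg, abs_of_pos hwpos] at this
      exact hnot this
    have hF'deg : ∀ y : ℤ, |y| = w → ldeg F' y = 0 := by
      intro y hy
      apply ldeg_eq_zero
      intro E hE hyE
      apply hnot
      have := cvar_mono hF'sub (abs_mem_cvar hE hyE)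
      rwa [hy] at this
    refine hns w ⟨hcvGF hwc, ?_⟩
    rw [hldF w, hldF (-w), if_neg hwC, if_neg hnwC, hF'deg w (abs_of_pos hwpos),
      hF'deg (-w) (by rw [abs_neg]; exact abs_of_pos hwpos)]
    simpa using hwm
  -- characterisation of singular variables of F₀
  have hchar : ∀ w ∈ singSet F₀, w ∈ cvar F₀ ∩ cvar G ∨
      (∃ y ∈ C, |y| = w ∧ ldeg F₀ y = 1 ∧ 2 ≤ ldeg F₀ (-y)) := by
    intro w hw
    obtain ⟨hwc, hwm⟩ := mem_singSet.1 hw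
    have hwpos : 0 < w := cvar_pos hF₀ hwc
    by_cases hwG : w ∈ cvar G
    · exact Or.inl (mem_inter.2 ⟨hwc, hwG⟩)
    right
    have hGdegw : ∀ y : ℤ, |y| = w → ldeg G y = 0 := by
      intro y hy
      apply ldeg_eq_zero
      intro E hE hyE
      exact hwG (hy ▸ abs_mem_cvar hE hyE)
    by_cases hyC : w ∈ C ∨ -w ∈ C
    · obtain ⟨y, hyCmem, hyabs⟩ : ∃ y ∈ C, |y| = w := by
        rcases hyC with h | h
        · exact ⟨w, h, abs_of_pos hwpos⟩
        · exact ⟨-w, h, by rw [abs_neg]; exact abs_of_pos hwpos⟩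
      have hnyC : -y ∉ C := hCcl.2 y hyCmem
      have hFy : ldeg F y = ldeg F' y + G.card := by rw [hldF y, if_pos hyCmem]
      have hFny : ldeg F (-y) = ldeg F' (-y) := by
        rw [hldF (-y), if_neg hnyC, hGdegw (-y) (by rw [abs_neg]; exact hyabs)]; omega
      have hF₀y : ldeg F₀ y = 1 + ldeg F' y := by rw [hldF₀ y, if_pos hyCmem]
      have hF₀ny : ldeg F₀ (-y) = ldeg F' (-y) := by
        rw [hldF₀ (-y), if_neg hnyC]
        omega
      have hnsF : ¬ (min (ldeg F y) (ldeg F (-y)) = 1) := by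
        intro h
        apply hns w
        have := singular_abs (F := F) (y := y) (hyabs ▸ hcvF₀F hwc) h
        rwa [hyabs] at this
      have hmin : min (ldeg F₀ y) (ldeg F₀ (-y)) = 1 := by
        have heq := min_abs_eq F₀ y
        rw [hyabs] at heq
        rw [← heq]
        exact hwm
      refine ⟨y, hyCmem, hyabs, ?_, ?_⟩ <;> omega
    · exfalso
      push_neg at hyC
      have hF'w : ∀ y : ℤ, |y| = w → ldeg F₀ y = ldeg F' y ∧ y ∉ C := by
        intro y hy
        have hyc : y ∉ C := by
          rcases abs_cases' hy with rfl | rfl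
          · exact hyC.1
          · exact hyC.2
        exact ⟨by rw [hldF₀ y, if_neg hyc]; omega, hyc⟩
      obtain ⟨e1, m1⟩ := hF'w w (abs_of_pos hwpos)
      obtain ⟨e2, m2⟩ := hF'w (-w) (by rw [abs_neg]; exact abs_of_pos hwpos)
      refine hns w ⟨hcvF₀F hwc, ?_⟩
      rw [hldF w, hldF (-w), if_neg m1, if_neg m2,
        hGdegw w (abs_of_pos hwpos), hGdegw (-w) (by rw [abs_neg]; exact abs_of_pos hwpos)]
      omega
  -- F₀ has no 1-singular variables
  have hF₀1s : ∀ w : ℤ, ¬(ldeg F₀ w = 1 ∧ ldeg F₀ (-w) = 1) := by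
    rintro w ⟨ha, hb⟩
    obtain ⟨C₁, hC₁, hwC₁⟩ := exists_of_ldeg_one ha
    obtain ⟨C₂, hC₂, hwC₂⟩ := exists_of_ldeg_one hb
    have hEq := lemB hF₀uhit ha hb hC₁ hwC₁ hC₂ hwC₂
    have hw0 : w ≠ 0 := clause_ne_zero (hF₀ _ hC₁) hwC₁
    have hGw0 : ∀ y : ℤ, y ∈ C ∨ -y ∈ C → ldeg G y = 0 := by
      intro y hy
      apply ldeg_eq_zero
      intro E hE hyE
      rcases hy with h | h
      · exact (hsep E hE y hyE).1 h
      · exact (hsep E hE y hyE).2 h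
    by_cases h1C : C₁ = C
    · rw [h1C] at hwC₁
      have hnwC : -w ∉ C := hCcl.2 w hwC₁
      have hFw : ldeg F w = ldeg F' w + G.card := by rw [hldF w, if_pos hwC₁]
      have hFnw : ldeg F (-w) = ldeg F' (-w) := by
        rw [hldF (-w), if_neg hnwC, hGw0 (-w) (Or.inr (by simpa using hwC₁))]
        omega
      have hF₀nw : ldeg F₀ (-w) = ldeg F' (-w) := by rw [hldF₀ (-w), if_neg hnwC]; omega
      refine hns |w| (singular_abs ?_ ?_)
      · exact hcvF₀F (abs_mem_cvar hC hwC₁)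
      · omega
    by_cases h2C : C₂ = C
    · rw [h2C] at hwC₂
      have hwCmem : -w ∈ C := hwC₂
      have hnwC : w ∉ C := fun h => hCcl.2 w h hwCmem
      have hFnw : ldeg F (-w) = ldeg F' (-w) + G.card := by rw [hldF (-w), if_pos hwCmem]
      have hFw : ldeg F w = ldeg F' w := by
        rw [hldF w, if_neg hnwC, hGw0 w (Or.inr hwCmem)]
        omega
      have hF₀w : ldeg F₀ w = ldeg F' w := by rw [hldF₀ w, if_neg hnwC]; omega
      refine hns |w| (singular_abs ?_ ?_)
      · have := abs_mem_cvar hC hwCmem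
        rw [abs_neg] at this
        exact hcvF₀F this
      · omega
    · have hC₁F : C₁ ∈ F := hF'F (mem_sdiff.2 ⟨hC₁, by simpa using h1C⟩)
      have hC₂F : C₂ ∈ F := hF'F (mem_sdiff.2 ⟨hC₂, by simpa using h2C⟩)
      apply noFS C₁ hC₁F w hwC₁
      rw [hEq, insert_erase hwC₂]
      exact hC₂F
  -- reduction of G
  set s := (cvar F₀ ∩ cvar G).card with hsdef
  have hGbound : nvar G ≤ N₁ + s := by
    obtain ⟨K, hK1, hK2, hK3, hK4⟩ := reduce (singSet G).card G le_rfl hGuhit hG1s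
    have := hN₁ K hK1 hK2 hK3
    have := card_le_card hGsing
    omega
  -- reduction of F₀
  have hF₀bound : nvar F₀ ≤ N₀ + s + 1 := by
    by_cases hsub : singSet F₀ ⊆ cvar F₀ ∩ cvar G
    · obtain ⟨K, hK1, hK2, hK3, hK4⟩ := reduce (singSet F₀).card F₀ le_rfl hF₀uhit hF₀1s
      have := hN₀ K hK1 hK2 hK3
      have := card_le_card hsub
      omega
    · obtain ⟨w, hwmem, hwnot⟩ := not_subset.1 hsub
      rcases hchar w hwmem with h | ⟨y, hyC, hyabs, hy1, hy2⟩
      · exact absurd h hwnot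
      obtain ⟨H', hU', hcard', hcvar', hf2', hf1', hsing', h1s'⟩ :=
        step hF₀uhit hC hyC hy1 hy2
      have hsingH' : singSet H' ⊆ cvar F₀ ∩ cvar G := by
        intro u hu
        have hu' := hsing' hu
        obtain ⟨hune, huS⟩ := mem_erase.1 hu'
        rcases hchar u huS with h | ⟨z, hzC, hzabs, hz1, hz2⟩
        · exact h
        · exfalso
          have hzy : z ≠ y := by
            rintro rfl
            exact hune hzabs.symm
          have ha : 2 ≤ ldeg H' z := hf1' z hzC hzy
          have hnzC : -z ∉ C := hCcl.2 z hzC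
          have hb : ldeg H' (-z) = ldeg F₀ (-z) := by
            apply hf2' (-z) _ hnzC
            rw [abs_neg, hzabs]
            exact hune
          have hmin := (mem_singSet.1 hu).2
          have habs := min_abs_eq H' z
          rw [hzabs] at habs
          omega
      have h1sH' : ∀ u : ℤ, ¬(ldeg H' u = 1 ∧ ldeg H' (-u) = 1) := by
        rintro u ⟨a, b⟩
        exact hF₀1s u (h1s' u a b)
      obtain ⟨K, hK1, hK2, hK3, hK4⟩ := reduce (singSet H').card H' le_rfl hU' h1sH'
      have hnvH' : nvar H' + 1 = nvar F₀ := by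
        rw [nvar, nvar, hcvar']
        exact card_erase_add_one (abs_mem_cvar hC hyC)
      have hδ : deficiency H' = deficiency F₀ := def_step hcard' hnvH'
      have hb1 := hN₀ K hK1 hK2 (hK3.trans hδ)
      have hb2 := card_le_card hsingH'
      omega
  -- conclusion
  have hkey : nvar F + s = nvar F₀ + nvar G := by
    rw [nvar, nvar, nvar, hcvF, hsdef]
    exact card_union_add_card_inter _ _
  omega
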